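/- Let K be a field with |K| ≥ n+1, J the n×n nilpotent Jordan block with ones on the superdiagonal, and Z a linear subspace of M(n×n,K) such that every element of J + Z is nilpotent. Then every A in Z satisfies A_{n,1} = 0. -/

import Mathlib

open Polynomial Matrix Finset

lemma aux_coeff {ι K : Type*} [DecidableEq ι] [CommRing K] (s : Finset ι) (a b : ι → K) :
    ((∏ i ∈ s, (X * C (b i) + C (a i))).coeff 1 = ∑ i ∈ s, b i * ∏ j ∈ s.erase i, a j) ∧
    ((∏ i ∈ s, (X * C (b i) + C (a i))).coeff 0 = ∏ i ∈ s, a i) := by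
  classical
  induction s using Finset.induction_on with
  | empty => simp [coeff_one]
  | insert i s hi ih =>
    obtain ⟨ih1, ih0⟩ := ih
    rw [Finset.prod_insert hi]
    constructor
    · rw [add_mul, coeff_add, mul_assoc, coeff_X_mul, coeff_C_mul, coeff_C_mul, ih0, ih1,
        Finset.sum_insert hi, Finset.erase_insert hi]
      rw [Finset.mul_sum]
      congr 1
      refine Finset.sum_congr rfl fun j hj => ?_
      rw [Finset.erase_insert_of_ne (by rintro rfl; exact hi hj),
        Finset.prod_insert (fun h => hi (Finset.mem_of_mem_erase h))]
      ring
    · rw [add_mul, coeff_add, mul_assoc, mul_coeff_zero, coeff_X_zero, zero_mul, zero_add,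
        coeff_C_mul, ih0, Finset.prod_insert hi]

/-- If every element of `J + Z` is nilpotent, where `J` is the nilpotent Jordan block and
`|K| ≥ n+1`, then every `A ∈ Z` satisfies `A_{n,1} = 0`. -/
theorem stmt5 (n : ℕ) (hn : 1 ≤ n) (K : Type*) [Field K]
    (hK : (n + 1 : Cardinal) ≤ Cardinal.mk K)
    (Z : Submodule K (Matrix (Fin n) (Fin n) K))
    (J : Matrix (Fin n) (Fin n) K)
    (hJ : J = Matrix.of fun (i j : Fin n) => if (i : ℕ) + 1 = (j : ℕ) then 1 else 0)
    (hS : ∀ A ∈ Z, IsNilpotent (J + A)) :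
    ∀ A ∈ Z, A ⟨n - 1, by omega⟩ ⟨0, by omega⟩ = 0 := by
  intro A hA
  obtain ⟨m, rfl⟩ : ∃ m, n = m + 1 := ⟨n - 1, by omega⟩
  show A (Fin.last m) 0 = 0
  set M : Matrix (Fin (m + 1)) (Fin (m + 1)) K[X] :=
    (X : K[X]) • A.map C + J.map C with hM
  set p : K[X] := M.det with hp
  -- degree bound
  have hdeg : p.natDegree ≤ m + 1 := by
    simpa using Polynomial.natDegree_det_X_add_C_le A J
  -- evaluation
  have heval : ∀ t : K, p.eval t = 0 := by
    intro t
    have hnil : IsNilpotent (J + t • A) := hS _ (Z.smul_mem t hA)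
    have hdet : (J + t • A).det = 0 := by
      obtain ⟨k, hk⟩ := hnil
      exact IsNilpotent.eq_zero ⟨k, by rw [← Matrix.det_pow, hk]; exact Matrix.det_zero⟩
    have h1 : p.eval t = (M.map (eval t)).det := by
      simpa [hp] using RingHom.map_det (evalRingHom t) M
    rw [h1, show M.map (eval t) = J + t • A by
      ext i j
      simp [hM, Matrix.add_apply, Matrix.map_apply, Matrix.smul_apply, smul_eq_mul]
      ring]
    exact hdet
  -- p = 0
  have hp0 : p = 0 := by
    apply Polynomial.eq_zero_of_forall_eval_zero_of_natDegree_lt_card p heval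
    have h1 : ((p.natDegree : ℕ) : Cardinal) < ((m + 2 : ℕ) : Cardinal) :=
      Nat.cast_lt.mpr (by omega)
    refine h1.trans_le (le_trans (le_of_eq ?_) hK)
    push_cast
    ring
  -- the special permutation
  set σ0 : Equiv.Perm (Fin (m + 1)) := (finRotate (m + 1))⁻¹ with hσ0
  have hσ00 : σ0 0 = Fin.last m := by
    have h1 : finRotate (m + 1) (Fin.last m) = 0 := by
      rw [finRotate_succ_apply, Fin.last_add_one]
    rw [hσ0, ← h1, Equiv.Perm.inv_def, Equiv.symm_apply_apply]
  have hσ0j : ∀ j : Fin (m + 1), j ≠ 0 → ((σ0 j : ℕ) + 1 = (j : ℕ)) := by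
    intro j hj
    have h1 : finRotate (m + 1) (σ0 j) = j := by
      simp [hσ0]
    rw [finRotate_succ_apply] at h1
    have hne : σ0 j ≠ Fin.last m := by
      rintro h
      rw [h, Fin.last_add_one] at h1
      exact hj h1.symm
    have := congrArg Fin.val h1
    rwa [Fin.val_add_one, if_neg hne] at this
  -- entries of J
  have hJne : ∀ (i j : Fin (m + 1)), J i j ≠ 0 → (i : ℕ) + 1 = (j : ℕ) := by
    intro i j h
    by_contra hc
    exact h (by rw [hJ]; simp [hc])
  have hJone : ∀ (i j : Fin (m + 1)), (i : ℕ) + 1 = (j : ℕ) → J i j = 1 := by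
    intro i j h
    rw [hJ]; simp [h]
  -- characterization
  have hchar : ∀ (σ : Equiv.Perm (Fin (m + 1))) (i : Fin (m + 1)),
      (∀ j, j ≠ i → ((σ j : ℕ) + 1 = (j : ℕ))) → i = 0 ∧ σ = σ0 := by
    intro σ i h
    have hi0 : i = 0 := by
      by_contra hi0
      have := h 0 (fun h' => hi0 h'.symm)
      simp at this
    subst hi0
    refine ⟨rfl, ?_⟩
    have hagree : ∀ j : Fin (m + 1), j ≠ 0 → σ j = σ0 j := by
      intro j hj
      have h1 := h j hj
      have h2 := hσ0j j hj
      exact Fin.val_injective (by omega)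
    ext j
    rcases eq_or_ne j 0 with rfl | hj
    · by_cases hc0 : σ0⁻¹ (σ 0) = 0
      · have : σ0 (σ0⁻¹ (σ 0)) = σ 0 := by rw [Equiv.Perm.inv_def, Equiv.apply_symm_apply]
        rw [hc0] at this
        simp [this.symm]
      · exfalso
        have h1 : σ (σ0⁻¹ (σ 0)) = σ0 (σ0⁻¹ (σ 0)) := hagree _ hc0
        rw [Equiv.Perm.inv_def, Equiv.apply_symm_apply] at h1
        exact hc0 (σ.injective h1)
    · simp [hagree j hj]
  -- compute the coefficient
  have hcoeff : p.coeff 1 = ∑ σ : Equiv.Perm (Fin (m + 1)),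
      ((Equiv.Perm.sign σ : ℤ)) • ∑ i, A (σ i) i * ∏ j ∈ Finset.univ.erase i, J (σ j) j := by
    rw [hp, Matrix.det_apply, Polynomial.finset_sum_coeff]
    refine Finset.sum_congr rfl fun σ _ => ?_
    rw [Units.smul_def, Polynomial.coeff_smul]
    congr 1
    have haux := (aux_coeff Finset.univ (fun j => J (σ j) j) (fun j => A (σ j) j)).1
    have hprod : (∏ i, M (σ i) i) = ∏ i, (X * C (A (σ i) i) + C (J (σ i) i)) :=
      Finset.prod_congr rfl fun i _ => by
        simp [hM, Matrix.add_apply, Matrix.smul_apply, Matrix.map_apply, smul_eq_mul]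
    rw [hprod]
    exact haux
  -- evaluate the sum
  have hsum : p.coeff 1 = ((Equiv.Perm.sign σ0 : ℤ)) • (A (Fin.last m) 0) := by
    rw [hcoeff]
    rw [Finset.sum_eq_single σ0]
    · congr 1
      rw [Finset.sum_eq_single 0]
      · rw [hσ00]
        have : ∏ j ∈ Finset.univ.erase 0, J (σ0 j) j = 1 := by
          refine Finset.prod_eq_one fun j hj => ?_
          exact hJone _ _ (hσ0j j (Finset.mem_erase.mp hj).1)
        rw [this, mul_one]
      · intro i _ hi
        have h0mem : (0 : Fin (m + 1)) ∈ Finset.univ.erase i :=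
          Finset.mem_erase.mpr ⟨fun h => hi h.symm, Finset.mem_univ _⟩
        rw [Finset.prod_eq_zero h0mem, mul_zero]
        rw [hσ00, hJ]
        simp
      · intro h
        exact absurd (Finset.mem_univ _) h
    · intro σ _ hσ
      have : (∑ i, A (σ i) i * ∏ j ∈ Finset.univ.erase i, J (σ j) j) = 0 := by
        refine Finset.sum_eq_zero fun i _ => ?_
        suffices h : (∏ j ∈ Finset.univ.erase i, J (σ j) j) = 0 by rw [h, mul_zero]
        by_contra hne
        refine hσ ((hchar σ i fun j hj => ?_).2)
        refine hJne _ _ fun h0 => hne ?_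
        exact Finset.prod_eq_zero (Finset.mem_erase.mpr ⟨hj, Finset.mem_univ _⟩) h0
      rw [this, smul_zero]
    · intro h
      exact absurd (Finset.mem_univ _) h
  -- finish
  have hfin : ((Equiv.Perm.sign σ0 : ℤ)) • (A (Fin.last m) 0) = 0 := by
    rw [← hsum, hp0, Polynomial.coeff_zero]
  rcases Int.units_eq_one_or (Equiv.Perm.sign σ0) with h | h <;> rw [h] at hfin
  · simpa using hfin
  · simpa [neg_eq_zero] using hfin
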